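/- Let G be a graph in which any two distinct cycles of length at most 5 are at distance at least 3. If C is a 9-cycle of G that has a triclaw, then no vertex of C is contained in a cycle of length at most 5. -/

import Mathlib

open SimpleGraph

namespace IFPaper

variable {V : Type}

/-- An `(I,F)`-coloring of a graph, encoded as a Boolean coloring where
`true` means color `I` and `false` means color `F`:  the `I`-colored vertices
form an independent set and the `F`-colored vertices induce a forest
(no cycle has all of its vertices colored `F`). -/
def IFColoring (G : SimpleGraph V) (c : V → Bool) : Prop :=
  (∀ ⦃u v : V⦄, G.Adj u v → c u = true → c v = false) ∧
  (∀ (v : V) (w : G.Walk v v), w.IsCycle → ¬ (∀ x ∈ w.support, c x = false))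

/-- A graph is `(I,F)`-colorable if it admits an `(I,F)`-coloring. -/
def IFColorable (G : SimpleGraph V) : Prop := ∃ c : V → Bool, IFColoring G c

/-- An `(I,F)`-coloring of the subgraph of `G` induced on the set `S`. -/
def IFColoringOn (G : SimpleGraph V) (S : Set V) (c : V → Bool) : Prop :=
  (∀ ⦃u v : V⦄, u ∈ S → v ∈ S → G.Adj u v → c u = true → c v = false) ∧
  (∀ (v : V) (w : G.Walk v v), w.IsCycle → (∀ x ∈ w.support, x ∈ S) →
    ¬ (∀ x ∈ w.support, c x = false))

/-- A splitting `F`-path of (the vertex set `Q` of) a cycle: a path all of whose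
vertices get color `F`, whose two endpoints lie on `Q`, and all of whose other
vertices (at least one) do not lie on `Q`. -/
def IsSplittingFPath (G : SimpleGraph V) (Q : Set V) (c : V → Bool)
    {a b : V} (p : G.Walk a b) : Prop :=
  p.IsPath ∧ (∀ x ∈ p.support, c x = false) ∧ a ∈ Q ∧ b ∈ Q ∧ 2 ≤ p.length ∧
  ∀ x ∈ p.support, x ≠ a → x ≠ b → x ∉ Q

/-- A super IF-coloring of `(G, Q)`: an `(I,F)`-coloring of `G` with no
splitting `F`-path of `Q`. -/
def SuperIFColoring (G : SimpleGraph V) (Q : Set V) (c : V → Bool) : Prop :=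
  IFColoring G c ∧ ∀ (a b : V) (p : G.Walk a b), ¬ IsSplittingFPath G Q c p

/-- `d* ≥ 3`: any two distinct cycles of length at most `5` are at distance at
least `3`. -/
def Cycles5Apart (G : SimpleGraph V) : Prop :=
  ∀ ⦃u v : V⦄ (c1 : G.Walk u u) (c2 : G.Walk v v),
    c1.IsCycle → c2.IsCycle → c1.length ≤ 5 → c2.length ≤ 5 →
    {e : Sym2 V | e ∈ c1.edges} ≠ {e : Sym2 V | e ∈ c2.edges} →
    ∀ x ∈ c1.support, ∀ y ∈ c2.support, 3 ≤ G.dist x y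

/-- A claw of the cycle `C`: a vertex not on `C` with three neighbors on `C`. -/
def HasClaw (G : SimpleGraph V) {v : V} (C : G.Walk v v) : Prop :=
  ∃ x : V, x ∉ C.support ∧ ∃ a b c : V, a ∈ C.support ∧ b ∈ C.support ∧ c ∈ C.support ∧
    a ≠ b ∧ a ≠ c ∧ b ≠ c ∧ G.Adj x a ∧ G.Adj x b ∧ G.Adj x c

/-- A triclaw of the cycle `C`: a triangle `x y z` disjoint from `C`, joined by
three edges to three distinct vertices of `C`. -/
def HasTriclaw (G : SimpleGraph V) {v : V} (C : G.Walk v v) : Prop :=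
  ∃ x y z : V, x ∉ C.support ∧ y ∉ C.support ∧ z ∉ C.support ∧
    G.Adj x y ∧ G.Adj y z ∧ G.Adj x z ∧
    ∃ a b c : V, a ∈ C.support ∧ b ∈ C.support ∧ c ∈ C.support ∧
      a ≠ b ∧ a ≠ c ∧ b ≠ c ∧ G.Adj x a ∧ G.Adj y b ∧ G.Adj z c

/-- A bad cycle is a `9`-cycle having a claw or a triclaw. -/
def IsBadCycle (G : SimpleGraph V) {v : V} (C : G.Walk v v) : Prop :=
  C.IsCycle ∧ C.length = 9 ∧ (HasClaw G C ∨ HasTriclaw G C)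

/-- A good cycle is a cycle that is not bad. -/
def IsGoodCycle (G : SimpleGraph V) {v : V} (C : G.Walk v v) : Prop :=
  C.IsCycle ∧ ¬ IsBadCycle G C

/-- The interior of an arc parametrized by `[0,1]`. -/
def ArcInterior (γ : ℝ → ℝ × ℝ) : Set (ℝ × ℝ) := γ '' Set.Ioo 0 1

/-- The image of an arc parametrized by `[0,1]`. -/
def ArcImage (γ : ℝ → ℝ × ℝ) : Set (ℝ × ℝ) := γ '' Set.Icc 0 1

/-- A plane embedding of a simple graph: an injective placement of the vertices
in the plane together with, for every edge, a simple arc joining the images of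
its endpoints, such that arcs meet only at common endpoints and no arc passes
through a vertex. -/
structure IsPlaneEmbedding (G : SimpleGraph V) (vtx : V → ℝ × ℝ)
    (arc : V → V → ℝ → ℝ × ℝ) : Prop where
  vtx_inj : Function.Injective vtx
  arc_cont : ∀ ⦃u v : V⦄, G.Adj u v → ContinuousOn (arc u v) (Set.Icc 0 1)
  arc_injOn : ∀ ⦃u v : V⦄, G.Adj u v → Set.InjOn (arc u v) (Set.Icc 0 1)
  arc_start : ∀ ⦃u v : V⦄, G.Adj u v → arc u v 0 = vtx u
  arc_end : ∀ ⦃u v : V⦄, G.Adj u v → arc u v 1 = vtx v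
  arc_symm : ∀ ⦃u v : V⦄, G.Adj u v → ∀ t : ℝ, arc v u t = arc u v (1 - t)
  arc_avoids_vtx : ∀ ⦃u v : V⦄, G.Adj u v → ∀ w : V, vtx w ∉ ArcInterior (arc u v)
  arc_disjoint : ∀ ⦃u v u' v' : V⦄, G.Adj u v → G.Adj u' v' → s(u, v) ≠ s(u', v') →
    ArcInterior (arc u v) ∩ ArcInterior (arc u' v') = ∅

/-- A graph is planar if it admits a plane embedding. -/
def IsPlanarGraph (G : SimpleGraph V) : Prop :=
  ∃ (vtx : V → ℝ × ℝ) (arc : V → V → ℝ → ℝ × ℝ), IsPlaneEmbedding G vtx arc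

/-- The subset of the plane covered by a plane drawing of `G`. -/
def Drawing (G : SimpleGraph V) (vtx : V → ℝ × ℝ) (arc : V → V → ℝ → ℝ × ℝ) :
    Set (ℝ × ℝ) :=
  Set.range vtx ∪ ⋃ (u : V) (v : V) (_ : G.Adj u v), ArcImage (arc u v)

/-- The subset of the plane covered by the drawing of a walk `w`. -/
def WalkDrawing (G : SimpleGraph V) (arc : V → V → ℝ → ℝ × ℝ)
    {a b : V} (w : G.Walk a b) : Set (ℝ × ℝ) :=
  ⋃ (u : V) (v : V) (_ : G.Adj u v) (_ : s(u, v) ∈ w.edges), ArcImage (arc u v)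

/-- A face of a plane drawing: a connected component of the complement of the
drawing. -/
def IsFace (G : SimpleGraph V) (vtx : V → ℝ × ℝ) (arc : V → V → ℝ → ℝ × ℝ)
    (f : Set (ℝ × ℝ)) : Prop :=
  ∃ p : ℝ × ℝ, p ∉ Drawing G vtx arc ∧
    f = connectedComponentIn (Drawing G vtx arc)ᶜ p

/-- The outer face: the unbounded face. -/
def IsOuterFace (G : SimpleGraph V) (vtx : V → ℝ × ℝ) (arc : V → V → ℝ → ℝ × ℝ)
    (f : Set (ℝ × ℝ)) : Prop :=
  IsFace G vtx arc f ∧ ¬ Bornology.IsBounded f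

/-- A vertex is on a face if its image lies on the boundary of the face. -/
def VertexOnFace (vtx : V → ℝ × ℝ) (f : Set (ℝ × ℝ)) (v : V) : Prop :=
  vtx v ∈ frontier f

/-- The face `f` is bounded by the (closed) walk `w`. -/
def FaceBoundedBy (G : SimpleGraph V) (vtx : V → ℝ × ℝ) (arc : V → V → ℝ → ℝ × ℝ)
    (f : Set (ℝ × ℝ)) {a : V} (w : G.Walk a a) : Prop :=
  IsFace G vtx arc f ∧ frontier f = WalkDrawing G arc w

/-- A vertex lies (strictly) inside the cycle `C` of the plane graph. -/
def VertexInsideCycle (G : SimpleGraph V) (vtx : V → ℝ × ℝ)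
    (arc : V → V → ℝ → ℝ × ℝ) {a : V} (C : G.Walk a a) (v : V) : Prop :=
  vtx v ∉ WalkDrawing G arc C ∧
  Bornology.IsBounded (connectedComponentIn (WalkDrawing G arc C)ᶜ (vtx v))

/-- A vertex lies (strictly) outside the cycle `C` of the plane graph. -/
def VertexOutsideCycle (G : SimpleGraph V) (vtx : V → ℝ × ℝ)
    (arc : V → V → ℝ → ℝ × ℝ) {a : V} (C : G.Walk a a) (v : V) : Prop :=
  vtx v ∉ WalkDrawing G arc C ∧
  ¬ Bornology.IsBounded (connectedComponentIn (WalkDrawing G arc C)ᶜ (vtx v))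

/-- A cycle of a plane graph is separating if its interior and its exterior
each contain a vertex of the graph. -/
def IsSeparatingCycle (G : SimpleGraph V) (vtx : V → ℝ × ℝ)
    (arc : V → V → ℝ → ℝ × ℝ) {a : V} (C : G.Walk a a) : Prop :=
  (∃ v : V, VertexInsideCycle G vtx arc C v) ∧
  (∃ v : V, VertexOutsideCycle G vtx arc C v)

/-- The cycle `C` has no chord in `G`. -/
def Chordless (G : SimpleGraph V) {a : V} (C : G.Walk a a) : Prop :=
  ∀ ⦃u v : V⦄, u ∈ C.support → v ∈ C.support → G.Adj u v → s(u, v) ∈ C.edges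

/-- The precoloring `c0` of the cycle `C0` extends to a super IF-coloring of
`(G, C0)`. -/
def ExtendsToSuper (G : SimpleGraph V) {v0 : V} (C0 : G.Walk v0 v0)
    (c0 : V → Bool) : Prop :=
  ∃ c : V → Bool, SuperIFColoring G {x | x ∈ C0.support} c ∧
    ∀ x ∈ C0.support, c x = c0 x

/-- A counterexample to the extension theorem: a planar graph with `d* ≥ 3`, a
good cycle `C0` of length at most `9`, and an `(I,F)`-coloring of `G[V(C0)]`
which does not extend to a super IF-coloring of `(G, C0)`. -/
def IsCounterexample (G : SimpleGraph V) {v0 : V} (C0 : G.Walk v0 v0)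
    (c0 : V → Bool) : Prop :=
  IsPlanarGraph G ∧ Cycles5Apart G ∧ IsGoodCycle G C0 ∧ C0.length ≤ 9 ∧
  IFColoringOn G {x | x ∈ C0.support} c0 ∧ ¬ ExtendsToSuper G C0 c0

/-- The quantity `|V(G)| + |E(G)|`. -/
noncomputable def graphSize {V : Type} [Fintype V] (G : SimpleGraph V) : ℕ :=
  Fintype.card V + G.edgeSet.ncard

/-- A minimal counterexample to the extension theorem: one minimizing
`|V(G)| + |E(G)|` among all counterexamples. -/
def IsMinimalCounterexample [Fintype V] (G : SimpleGraph V) {v0 : V}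
    (C0 : G.Walk v0 v0) (c0 : V → Bool) : Prop :=
  IsCounterexample G C0 c0 ∧
  ∀ (n : ℕ) (G' : SimpleGraph (Fin n)) (v0' : Fin n) (C0' : G'.Walk v0' v0')
    (c0' : Fin n → Bool), IsCounterexample G' C0' c0' →
      graphSize G ≤ graphSize G'

/-- A chord of the cycle `C` splitting it into two cycles of lengths `l1` and
`l2`: an edge between two non-consecutive vertices of `C` together with two
cycles of lengths `l1` and `l2` which both use the chord, use otherwise only
edges of `C`, and together partition the edges of `C`. -/
def HasChordSplit (G : SimpleGraph V) {a : V} (C : G.Walk a a) (l1 l2 : ℕ) : Prop :=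
  ∃ u v : V, u ∈ C.support ∧ v ∈ C.support ∧ G.Adj u v ∧ s(u, v) ∉ C.edges ∧
    ∃ (c1 c2 : G.Walk u u), c1.IsCycle ∧ c2.IsCycle ∧
      c1.length = l1 ∧ c2.length = l2 ∧
      s(u, v) ∈ c1.edges ∧ s(u, v) ∈ c2.edges ∧
      (∀ e ∈ c1.edges, e ≠ s(u, v) → e ∈ C.edges) ∧
      (∀ e ∈ c2.edges, e ≠ s(u, v) → e ∈ C.edges) ∧
      (∀ e ∈ C.edges, (e ∈ c1.edges ↔ e ∉ c2.edges))

/-- A `(l1, l2, l3)`-claw of the cycle `C`: a claw which together with `C`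
forms three cycles of lengths `l1`, `l2` and `l3`. -/
def HasClawSplit (G : SimpleGraph V) {a : V} (C : G.Walk a a) (l1 l2 l3 : ℕ) : Prop :=
  ∃ x : V, x ∉ C.support ∧ ∃ v1 v2 v3 : V,
    v1 ∈ C.support ∧ v2 ∈ C.support ∧ v3 ∈ C.support ∧
    v1 ≠ v2 ∧ v1 ≠ v3 ∧ v2 ≠ v3 ∧ G.Adj x v1 ∧ G.Adj x v2 ∧ G.Adj x v3 ∧
    ∃ (w1 w2 w3 : G.Walk x x), w1.IsCycle ∧ w2.IsCycle ∧ w3.IsCycle ∧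
      w1.length = l1 ∧ w2.length = l2 ∧ w3.length = l3 ∧
      (∀ e ∈ w1.edges, e ∈ C.edges ∨ e = s(x, v1) ∨ e = s(x, v2) ∨ e = s(x, v3)) ∧
      (∀ e ∈ w2.edges, e ∈ C.edges ∨ e = s(x, v1) ∨ e = s(x, v2) ∨ e = s(x, v3)) ∧
      (∀ e ∈ w3.edges, e ∈ C.edges ∨ e = s(x, v1) ∨ e = s(x, v2) ∨ e = s(x, v3)) ∧
      (∀ e ∈ C.edges, (e ∈ w1.edges ∧ e ∉ w2.edges ∧ e ∉ w3.edges) ∨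
        (e ∉ w1.edges ∧ e ∈ w2.edges ∧ e ∉ w3.edges) ∨
        (e ∉ w1.edges ∧ e ∉ w2.edges ∧ e ∈ w3.edges))

/-- A special `9`-cycle: a `9`-cycle having a `(3,8)`-chord or a
`(5,5,5)`-claw. -/
def IsSpecial9Cycle (G : SimpleGraph V) {a : V} (C : G.Walk a a) : Prop :=
  C.IsCycle ∧ C.length = 9 ∧ (HasChordSplit G C 3 8 ∨ HasClawSplit G C 5 5 5)

/-- Two cycles are normally adjacent if they share exactly one edge and
exactly two vertices. -/
def NormallyAdjacent (G : SimpleGraph V) {a b : V}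
    (c1 : G.Walk a a) (c2 : G.Walk b b) : Prop :=
  (∃ e : Sym2 V, {e' : Sym2 V | e' ∈ c1.edges} ∩ {e' : Sym2 V | e' ∈ c2.edges} = {e}) ∧
  (∃ x y : V, x ≠ y ∧ {z : V | z ∈ c1.support} ∩ {z : V | z ∈ c2.support} = {x, y})

/-- A `3`-fold cover `(H, L)` of `G`. -/
def IsDPCover (G : SimpleGraph V) {W : Type} (H : SimpleGraph W)
    (L : V → Finset W) : Prop :=
  (∀ v : V, (L v).card = 3) ∧
  (∀ ⦃u v : V⦄, u ≠ v → Disjoint (L u) (L v)) ∧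
  (∀ v : V, ∀ a ∈ L v, ∀ b ∈ L v, ¬ H.Adj a b) ∧
  (∀ ⦃a b : W⦄, H.Adj a b → ∃ u v : V, G.Adj u v ∧ a ∈ L u ∧ b ∈ L v) ∧
  (∀ ⦃u v : V⦄, u ≠ v → ∀ a ∈ L u, ∀ b ∈ L v, ∀ b' ∈ L v,
    H.Adj a b → H.Adj a b' → b = b')

/-- `G` is DP-`3`-colorable: for every `3`-fold cover `(H, L)` of `G` there is
an independent transversal picking one vertex from each fiber. -/
def DP3Colorable (G : SimpleGraph V) : Prop :=
  ∀ (W : Type) (H : SimpleGraph W) (L : V → Finset W), IsDPCover G H L →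
    ∃ f : V → W, (∀ v : V, f v ∈ L v) ∧ ∀ u v : V, ¬ H.Adj (f u) (f v)


section Statement9Helpers

variable {G : SimpleGraph V}

private lemma support_getElem? {u v : V} (p : G.Walk u v) :
    ∀ i ≤ p.length, p.support[i]? = some (p.getVert i) := by
  induction p with
  | nil =>
      intro i hi
      simp only [Walk.length_nil, Nat.le_zero] at hi
      subst hi; simp [SimpleGraph.Walk.getVert]
  | cons h q ih =>
      intro i hi
      cases i with
      | zero => simp [SimpleGraph.Walk.getVert]
      | succ n =>
          simp only [Walk.support_cons, List.getElem?_cons_succ, Walk.getVert_cons_succ]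
          exact ih n (by simpa using hi)

private lemma exists_edge_of_mem_support {u v x : V} (p : G.Walk u v) (hnn : ¬ p.Nil)
    (hx : x ∈ p.support) : ∃ e ∈ p.edges, x ∈ e := by
  induction p with
  | nil => simp at hnn
  | cons h q ih =>
      rename_i a b c
      simp only [Walk.support_cons, List.mem_cons] at hx
      rcases hx with rfl | hx
      · exact ⟨s(x, b), by simp, by simp⟩
      · by_cases hq : q.Nil
        · have hxb : x = b := by
            cases q with
            | nil => simpa using hx
            | cons h' q' => exact absurd hq Walk.not_nil_cons
          exact ⟨s(a, b), by simp, by simp [hxb]⟩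
        · obtain ⟨e, he, hxe⟩ := ih hq hx
          exact ⟨e, by simp [he], hxe⟩

private lemma isCycle3 {x y z : V} (hxy : G.Adj x y) (hyz : G.Adj y z) (hzx : G.Adj z x) :
    (Walk.cons hxy (Walk.cons hyz (Walk.cons hzx Walk.nil))).IsCycle := by
  have h1 := hxy.ne; have h2 := hyz.ne; have h3 := hzx.ne
  simp [Walk.isCycle_def, Walk.isTrail_def, List.Nodup, Sym2.eq_iff]
  aesop

private lemma isCycle4 {x y z w : V} (h1 : G.Adj x y) (h2 : G.Adj y z) (h3 : G.Adj z w)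
    (h4 : G.Adj w x) (hxz : x ≠ z) (hyw : y ≠ w) :
    (Walk.cons h1 (Walk.cons h2 (Walk.cons h3 (Walk.cons h4 Walk.nil)))).IsCycle := by
  have := h1.ne; have := h2.ne; have := h3.ne; have := h4.ne
  simp [Walk.isCycle_def, Walk.isTrail_def, List.Nodup, Sym2.eq_iff]
  aesop

private lemma isCycle5 {x y z w v : V} (h1 : G.Adj x y) (h2 : G.Adj y z) (h3 : G.Adj z w)
    (h4 : G.Adj w v) (h5 : G.Adj v x) (hxz : x ≠ z) (hxw : x ≠ w) (hyw : y ≠ w)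
    (hyv : y ≠ v) (hzv : z ≠ v) :
    (Walk.cons h1 (Walk.cons h2 (Walk.cons h3 (Walk.cons h4
      (Walk.cons h5 Walk.nil))))).IsCycle := by
  have := h1.ne; have := h2.ne; have := h3.ne; have := h4.ne; have := h5.ne
  simp [Walk.isCycle_def, Walk.isTrail_def, List.Nodup, Sym2.eq_iff]
  aesop

private def cycd (i j : Fin 9) : ℕ := min (i - j).val (j - i).val

private lemma cycd_main : ∀ i j k m : Fin 9, i ≠ j → i ≠ k → j ≠ k →
    ¬ cycd m i ≤ 1 → ¬ cycd m j ≤ 1 → ¬ cycd m k ≤ 1 →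
    cycd i j ≤ 2 ∨ cycd i k ≤ 2 ∨ cycd j k ≤ 2 := by decide

private lemma cycd_le_one (i j : Fin 9) (h : cycd i j ≤ 1) : j = i ∨ j = i + 1 ∨ i = j + 1 := by
  revert h; revert i j; decide

private lemma cycd_le_two (i j : Fin 9) (h : cycd i j ≤ 2) :
    j = i ∨ j = i + 1 ∨ i = j + 1 ∨ j = i + 1 + 1 ∨ i = j + 1 + 1 := by
  revert h; revert i j; decide

private lemma fin9_succ_ne (i : Fin 9) : i + 1 ≠ i := by revert i; decide
private lemma fin9_succ_ne2 (i : Fin 9) : i ≠ i + 1 + 1 := by revert i; decide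
private lemma fin9_succ_ne3 (i : Fin 9) : i + 1 ≠ i + 1 + 1 := by revert i; decide
private lemma fin9_val_succ (i : Fin 9) : (i + 1).val = (i.val + 1) % 9 := by revert i; decide

end Statement9Helpers

/-- In a graph in which any two distinct cycles of length at
most `5` are at distance at least `3`, if a `9`-cycle `C` has a triclaw, then
no vertex of `C` is contained in a cycle of length at most `5`. -/
theorem triclaw_nine_cycle_vertices_not_on_short_cycles {V : Type}
    (G : SimpleGraph V) (hdist : Cycles5Apart G)
    {a : V} (C : G.Walk a a) (hC : C.IsCycle) (hlen : C.length = 9)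
    (htriclaw : HasTriclaw G C) :
    ∀ z ∈ C.support, ∀ (r : V) (w : G.Walk r r),
      w.IsCycle → w.length ≤ 5 → z ∉ w.support := by
  classical
  intro z0 hz0 r w hw hwlen hz0w
  obtain ⟨x, y, z, hx, hy, hz, hxy, hyz, hxz, a', b', c', ha', hb', hc',
    hab, hac, hbc, hxa, hyb, hzc⟩ := htriclaw
  have hshare : ∀ {p q : V} (c1 : G.Walk p p) (c2 : G.Walk q q), c1.IsCycle → c2.IsCycle →
      c1.length ≤ 5 → c2.length ≤ 5 → ∀ v, v ∈ c1.support → v ∈ c2.support →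
      {e : Sym2 V | e ∈ c1.edges} = {e : Sym2 V | e ∈ c2.edges} := by
    intro p q c1 c2 h1 h2 l1 l2 v hv1 hv2
    by_contra hne
    have h3 := hdist c1 c2 h1 h2 l1 l2 hne v hv1 v hv2
    rw [SimpleGraph.dist_self] at h3
    omega
  set T : G.Walk x x := Walk.cons hxy (Walk.cons hyz (Walk.cons hxz.symm Walk.nil)) with hT
  have hTcyc : T.IsCycle := isCycle3 hxy hyz hxz.symm
  have hTlen : T.length ≤ 5 := by simp [hT]
  have hTw : {e : Sym2 V | e ∈ T.edges} ≠ {e : Sym2 V | e ∈ w.edges} := by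
    intro heq
    obtain ⟨e, he, hz0e⟩ := exists_edge_of_mem_support w hw.not_nil hz0w
    have heT : e ∈ T.edges := by
      have := (Set.ext_iff.mp heq e).mpr he
      exact this
    simp only [hT, Walk.edges_cons, Walk.edges_nil, List.mem_cons, List.not_mem_nil,
      or_false] at heT
    rcases heT with h | h | h <;> subst h <;> rw [Sym2.mem_iff] at hz0e <;>
      rcases hz0e with rfl | rfl <;>
        first | exact hx hz0 | exact hy hz0 | exact hz hz0
  have hd := hdist T w hTcyc hw hTlen hwlen hTw
  have hfar : ∀ (p t : V), p ∈ T.support → G.Adj p t → z0 ≠ t ∧ ¬ G.Adj z0 t := by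
    intro p t hp hpt
    have h3 := hd p hp z0 hz0w
    constructor
    · rintro rfl
      have h1 : G.dist p z0 ≤ 1 := by
        have := SimpleGraph.dist_le (Walk.cons hpt Walk.nil)
        simpa using this
      omega
    · intro hadj
      have h2 : G.dist p z0 ≤ 2 := by
        have := SimpleGraph.dist_le (Walk.cons hpt (Walk.cons hadj.symm Walk.nil))
        simpa using this
      omega
  have hgv9 : C.getVert 9 = C.getVert 0 := by
    rw [Walk.getVert_zero, ← hlen, Walk.getVert_length]
  set f : Fin 9 → V := fun i => C.getVert i.val with hf
  have hmemf : ∀ i : Fin 9, f i ∈ C.support := by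
    intro i
    rw [hf]
    rw [Walk.mem_support_iff_exists_getVert]
    exact ⟨i.val, rfl, by rw [hlen]; omega⟩
  have hadjf : ∀ i : Fin 9, G.Adj (f i) (f (i + 1)) := by
    intro i
    have hv := fin9_val_succ i
    have hilt := i.isLt
    rw [hf]
    by_cases h8 : i.val = 8
    · have h0 : (i + 1).val = 0 := by rw [hv, h8]
      simp only [h0, h8]
      rw [← hgv9]
      exact C.adj_getVert_succ (by rw [hlen]; omega)
    · have h1 : (i + 1).val = i.val + 1 := by rw [hv]; omega
      simp only [h1]
      exact C.adj_getVert_succ (by rw [hlen]; omega)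
  have hnodup : C.support.tail.Nodup := hC.support_nodup
  have htlen : C.support.tail.length = 9 := by
    rw [List.length_tail, Walk.length_support, hlen]
  have keyinj : ∀ i j : ℕ, 1 ≤ i → i ≤ 9 → 1 ≤ j → j ≤ 9 →
      C.getVert i = C.getVert j → i = j := by
    intro i j h1 h2 h3 h4 heq
    have gi : C.support.tail[i-1]? = some (C.getVert i) := by
      rw [List.getElem?_tail]
      have hii : i - 1 + 1 = i := by omega
      rw [hii]
      exact support_getElem? C i (by rw [hlen]; omega)
    have gj : C.support.tail[j-1]? = some (C.getVert j) := by
      rw [List.getElem?_tail]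
      have hjj : j - 1 + 1 = j := by omega
      rw [hjj]
      exact support_getElem? C j (by rw [hlen]; omega)
    have := (List.getElem?_inj (l := C.support.tail) (i := i - 1) (j := j - 1)
      (by rw [htlen]; omega) hnodup).mp (by rw [gi, gj, heq])
    omega
  have hinjf : ∀ i j : Fin 9, f i = f j → i = j := by
    intro i j heq
    have hlift : ∀ n : Fin 9, C.getVert (if n.val = 0 then 9 else n.val) = f n := by
      intro n
      rw [hf]
      show C.getVert (if n.val = 0 then 9 else n.val) = C.getVert n.val
      by_cases h : n.val = 0
      · rw [if_pos h, hgv9, h]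
      · rw [if_neg h]
    have hi9 := i.isLt
    have hj9 := j.isLt
    have hkey := keyinj (if i.val = 0 then 9 else i.val) (if j.val = 0 then 9 else j.val)
      (by split <;> omega) (by split <;> omega) (by split <;> omega) (by split <;> omega)
      (by rw [hlift i, hlift j, heq])
    apply Fin.ext
    split_ifs at hkey <;> omega
  have hpos : ∀ v ∈ C.support, ∃ i : Fin 9, f i = v := by
    intro v hv
    rw [Walk.mem_support_iff_exists_getVert] at hv
    obtain ⟨n, hn, hnle⟩ := hv
    rw [hlen] at hnle
    by_cases h9 : n = 9
    · refine ⟨0, ?_⟩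
      rw [h9, hgv9, Walk.getVert_zero] at hn
      rw [hf]
      simpa using hn
    · exact ⟨⟨n, by omega⟩, hn⟩
  have aux : ∀ (p q t : V) (i j : Fin 9), p ∉ C.support → q ∉ C.support → t ∉ C.support →
      G.Adj p q → G.Adj q t → G.Adj t p → G.Adj p (f i) → G.Adj q (f j) →
      i ≠ j → cycd i j ≤ 2 → False := by
    intro p q t i j hp hq ht hpq hqt htp hpfi hqfj hij hcd
    have hfij : f i ≠ f j := fun h => hij (hinjf _ _ h)
    have hTcyc' : (Walk.cons hpq (Walk.cons hqt (Walk.cons htp Walk.nil))).IsCycle :=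
      isCycle3 hpq hqt htp
    have htne : ∀ u, u ∈ C.support → t ≠ u := fun u hu h => ht (h ▸ hu)
    have killer : ∀ (D : G.Walk p p), D.IsCycle → D.length ≤ 5 → t ∉ D.support → False := by
      intro D hD hDlen htD
      have heq := hshare (Walk.cons hpq (Walk.cons hqt (Walk.cons htp Walk.nil))) D
        hTcyc' hD (by simp) hDlen p (by simp) D.start_mem_support
      have hqtD : s(q, t) ∈ D.edges := (Set.ext_iff.mp heq s(q,t)).mp (by simp)
      exact htD (D.snd_mem_support_of_mem_edges hqtD)
    rcases cycd_le_two i j hcd with h | h | h | h | h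
    · exact hij h.symm
    all_goals first
    | -- adjacency cases: get hadj' : Adj (f i) (f j)
      (have hadj' : G.Adj (f i) (f j) := by
        first
        | (rw [h]; exact hadjf i)
        | (rw [h]; exact (hadjf j).symm)
       refine killer (Walk.cons hpfi (Walk.cons hadj' (Walk.cons hqfj.symm
          (Walk.cons hpq.symm Walk.nil)))) ?_ (by simp) ?_
       · exact isCycle4 hpfi hadj' hqfj.symm hpq.symm
           (fun hh => hp (by rw [hh]; exact hmemf j))
           (fun hh => hq (by rw [← hh]; exact hmemf i))
       · simp only [Walk.support_cons, Walk.support_nil, List.mem_cons,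
           List.not_mem_nil, or_false, List.mem_singleton]
         push_neg
         exact ⟨htp.ne, htne _ (hmemf i), htne _ (hmemf j), hqt.ne', htp.ne⟩)
    | -- two-step cases
      (obtain ⟨mid, h1m, h2m, hmidC⟩ :
          ∃ mid, G.Adj (f i) mid ∧ G.Adj mid (f j) ∧ mid ∈ C.support := by
        first
        | exact ⟨f (i+1), hadjf i, by rw [h]; exact hadjf (i+1), hmemf (i+1)⟩
        | exact ⟨f (j+1), by rw [h]; exact (hadjf (j+1)).symm, (hadjf j).symm, hmemf (j+1)⟩
       refine killer (Walk.cons hpfi (Walk.cons h1m (Walk.cons h2m (Walk.cons hqfj.symm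
          (Walk.cons hpq.symm Walk.nil))))) ?_ (by simp) ?_
       · exact isCycle5 hpfi h1m h2m hqfj.symm hpq.symm
           (fun hh => hp (by rw [hh]; exact hmidC))
           (fun hh => hp (by rw [hh]; exact hmemf j))
           hfij
           (fun hh => hq (by rw [← hh]; exact hmemf i))
           (fun hh => hq (by rw [← hh]; exact hmidC))
       · simp only [Walk.support_cons, Walk.support_nil, List.mem_cons,
           List.not_mem_nil, or_false, List.mem_singleton]
         push_neg
         exact ⟨htp.ne, htne _ (hmemf i), htne _ hmidC, htne _ (hmemf j), hqt.ne', htp.ne⟩)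
  obtain ⟨i, hi⟩ := hpos a' ha'
  obtain ⟨j, hj⟩ := hpos b' hb'
  obtain ⟨k, hk⟩ := hpos c' hc'
  obtain ⟨m, hm⟩ := hpos z0 hz0
  have hij : i ≠ j := by rintro rfl; exact hab (hi.symm.trans hj)
  have hik : i ≠ k := by rintro rfl; exact hac (hi.symm.trans hk)
  have hjk : j ≠ k := by rintro rfl; exact hbc (hj.symm.trans hk)
  have hfarpos : ∀ (p : V) (n : Fin 9), p ∈ T.support → G.Adj p (f n) → ¬ cycd m n ≤ 1 := by
    intro p n hpT hpfn hle
    obtain ⟨hne, hnadj⟩ := hfar p (f n) hpT hpfn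
    rcases cycd_le_one m n hle with h | h | h
    · exact hne (by rw [h, hm])
    · exact hnadj (by rw [h, ← hm]; exact hadjf m)
    · exact hnadj (by rw [← hm, h]; exact (hadjf n).symm)
  have hxT : x ∈ T.support := by simp [hT]
  have hyT : y ∈ T.support := by simp [hT]
  have hzT : z ∈ T.support := by simp [hT]
  rcases cycd_main i j k m hij hik hjk
    (hfarpos x i hxT (by rw [hi]; exact hxa))
    (hfarpos y j hyT (by rw [hj]; exact hyb))
    (hfarpos z k hzT (by rw [hk]; exact hzc)) with h | h | h
  · exact aux x y z i j hx hy hz hxy hyz hxz.symm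
      (by rw [hi]; exact hxa) (by rw [hj]; exact hyb) hij h
  · exact aux x z y i k hx hz hy hxz hyz.symm hxy.symm
      (by rw [hi]; exact hxa) (by rw [hk]; exact hzc) hik h
  · exact aux y z x j k hy hz hx hyz hxz.symm hxy
      (by rw [hj]; exact hyb) (by rw [hk]; exact hzc) hjk h


end IFPaper
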